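/- There exists an absolute constant c > 0 with the following property. Let q ≥ 3 be odd, let a be an integer with gcd(a,q) = 1, let 0 < δ ≤ 1/2, set ℓ = ⌊log₂ q⌋ + 1, and let E ⊆ {0,1,…,ℓ−1} satisfy |E| < δℓ. Then there exists j ∈ {0,1,…,ℓ−1} \ E such that ‖2^j a/q‖ ≥ c · 2^{−δℓ}, where ‖·‖ denotes the distance to the nearest integer. -/

import Mathlib

open Finset

/-- The distance from a real number to the nearest integer. -/
noncomputable def distNearestInt (t : ℝ) : ℝ := |t - round t|

lemma distNearestInt_int_add (n : ℤ) (t : ℝ) :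
    distNearestInt ((n : ℝ) + t) = distNearestInt t := by
  unfold distNearestInt
  rw [round_intCast_add]
  push_cast
  ring_nf

lemma distNearestInt_eq_abs {t : ℝ} (h : |t| ≤ 1 / 2) : distNearestInt t = |t| := by
  have h1 := abs_le.mp h
  unfold distNearestInt
  rw [round_eq]
  rcases lt_or_eq_of_le h1.2 with h2 | h2
  · have hf : ⌊t + 1 / 2⌋ = 0 := by
      rw [Int.floor_eq_zero_iff, Set.mem_Ico]
      constructor
      · linarith [h1.1]
      · linarith
    rw [hf]
    norm_num
  · rw [h2]
    norm_num

lemma distNearestInt_two_mul {t : ℝ} (h : distNearestInt t ≤ 1 / 4) :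
    distNearestInt (2 * t) = 2 * distNearestInt t := by
  have hd : distNearestInt t = |t - round t| := rfl
  have h2 : 2 * t = ((2 * round t : ℤ) : ℝ) + 2 * (t - round t) := by push_cast; ring
  rw [h2, distNearestInt_int_add]
  rw [distNearestInt_eq_abs (by rw [abs_mul]; rw [hd] at h; rw [abs_two]; linarith)]
  rw [abs_mul, abs_two, hd]

lemma one_div_le_distNearestInt {n : ℤ} {q : ℕ} (hq : 0 < q) (h : ¬((q : ℤ) ∣ n)) :
    1 / (q : ℝ) ≤ distNearestInt ((n : ℝ) / q) := by
  unfold distNearestInt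
  set r := round ((n : ℝ) / q) with hr
  have hqR : (0 : ℝ) < q := by exact_mod_cast hq
  have hne : n - q * r ≠ 0 := by
    intro hc
    exact h ⟨r, by omega⟩
  have h1 : (1 : ℝ) ≤ |((n - q * r : ℤ) : ℝ)| := by
    rw [← Int.cast_abs]
    exact_mod_cast Int.one_le_abs hne
  have h2 : (n : ℝ) / q - r = ((n - q * r : ℤ) : ℝ) / q := by
    push_cast
    field_simp
  rw [h2, abs_div, abs_of_pos hqR]
  gcongr

/-- for odd `q ≥ 3`, `(a,q) = 1`, `0 < δ ≤ 1/2`, `ℓ = ⌊log₂ q⌋ + 1`, and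
`E ⊆ {0,…,ℓ-1}` with `|E| < δℓ`, there is `j < ℓ`, `j ∉ E`, with `‖2^j a/q‖ ≥ c 2^{-δℓ}`. -/
theorem exists_digit_not_in_E_far_from_int :
    ∃ c : ℝ, 0 < c ∧ ∀ (q : ℕ), 3 ≤ q → Odd q → ∀ a : ℤ, Int.gcd a q = 1 →
      ∀ δ : ℝ, 0 < δ → δ ≤ 1 / 2 →
      ∀ E : Finset ℕ, E ⊆ Finset.range (Nat.log 2 q + 1) →
      (E.card : ℝ) < δ * (Nat.log 2 q + 1) →
      ∃ j ∈ Finset.range (Nat.log 2 q + 1), j ∉ E ∧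
        c * (2 : ℝ) ^ (-(δ * (Nat.log 2 q + 1)))
          ≤ distNearestInt ((2 : ℝ) ^ j * a / q) := by
  refine ⟨1 / 8, by norm_num, ?_⟩
  intro q hq3 hqodd a hgcd δ hδ0 hδ2 E hEsub hEcard
  set ℓ : ℕ := Nat.log 2 q + 1 with hℓ
  set L : ℝ := (Nat.log 2 q : ℝ) + 1 with hL
  have hLℓ : (ℓ : ℝ) = L := by rw [hℓ, hL]; push_cast; ring
  set B : ℝ := 1 / 8 * (2 : ℝ) ^ (-(δ * L)) with hB
  have hBpos : 0 < B := by
    rw [hB]; positivity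
  have hL1 : (1 : ℝ) ≤ L := by
    have : (0:ℝ) ≤ (Nat.log 2 q : ℝ) := Nat.cast_nonneg _
    rw [hL]; linarith
  by_contra hcon
  push_neg at hcon
  -- hcon : ∀ j ∈ range ℓ, j ∉ E → distNearestInt (2^j a / q) < B
  set v : ℕ → ℝ := fun j => distNearestInt ((2 : ℝ) ^ j * a / q) with hv
  have hqpos : 0 < q := by omega
  have hqR : (0 : ℝ) < q := by exact_mod_cast hqpos
  -- non-divisibility
  have hndvd : ∀ j : ℕ, ¬((q : ℤ) ∣ 2 ^ j * a) := by
    intro j hdvd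
    have h1 : q ∣ (2 ^ j * a).natAbs := by
      have := Int.natAbs_dvd_natAbs.mpr hdvd
      simpa using this
    rw [Int.natAbs_mul, Int.natAbs_pow] at h1
    have hc2 : Nat.Coprime q 2 := by
      rw [Nat.coprime_comm]
      exact Nat.coprime_two_left.mpr hqodd
    have hca : Nat.Coprime q a.natAbs := by
      rw [Nat.coprime_comm]
      exact hgcd
    have hcop : Nat.Coprime q ((2 : ℤ).natAbs ^ j * a.natAbs) :=
      Nat.Coprime.mul_right (Nat.Coprime.pow_right j (by simpa using hc2)) hca
    have := Nat.Coprime.eq_one_of_dvd hcop h1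
    omega
  -- lower bound for v
  have hvlb : ∀ j : ℕ, 1 / (q : ℝ) ≤ v j := by
    intro j
    have hcast : ((2 ^ j * a : ℤ) : ℝ) / q = (2 : ℝ) ^ j * a / q := by push_cast; try ring
    have := one_div_le_distNearestInt hqpos (hndvd j)
    rwa [hcast] at this
  have hvpos : ∀ j, 0 < v j := fun j => lt_of_lt_of_le (by positivity) (hvlb j)
  -- doubling
  have hdbl : ∀ j : ℕ, v j ≤ 1 / 4 → v (j + 1) = 2 * v j := by
    intro j hj
    have hx : (2 : ℝ) ^ (j + 1) * a / q = 2 * ((2 : ℝ) ^ j * a / q) := by ring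
    show distNearestInt ((2 : ℝ) ^ (j + 1) * a / q) = 2 * v j
    rw [hx, distNearestInt_two_mul hj]
  -- set of good indices
  set S : Finset ℕ := Finset.range ℓ \ E with hSdef
  have hEcard' : (E.card : ℝ) < δ * L := hEcard
  have hEcardℓ : E.card < ℓ := by
    have : (E.card : ℝ) < (ℓ : ℝ) := by
      rw [hLℓ]
      calc (E.card : ℝ) < δ * L := hEcard'
        _ ≤ (1 / 2) * L := by nlinarith
        _ < L := by nlinarith
    exact_mod_cast this
  have hSne : S.Nonempty := by
    rw [← Finset.card_pos, hSdef, Finset.card_sdiff_of_subset hEsub]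
    have : ℓ = (Finset.range ℓ).card := (Finset.card_range ℓ).symm
    omega
  set j0 : ℕ := S.min' hSne with hj0def
  set jL : ℕ := S.max' hSne with hjLdef
  have hj0S : j0 ∈ S := S.min'_mem hSne
  have hjLS : jL ∈ S := S.max'_mem hSne
  have hj0jL : j0 ≤ jL := S.min'_le jL hjLS
  have hmemS : ∀ j, j ∈ S ↔ j < ℓ ∧ j ∉ E := by
    intro j
    rw [hSdef, Finset.mem_sdiff, Finset.mem_range]
  have hjLℓ : jL < ℓ := ((hmemS jL).mp hjLS).1
  have hSsmall : ∀ j ∈ S, v j < B := by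
    intro j hj
    obtain ⟨h1, h2⟩ := (hmemS j).mp hj
    exact hcon j (Finset.mem_range.mpr h1) h2
  -- counter
  set e : ℕ → ℕ := fun j => (E.filter (fun i => i ≤ j)).card with he
  have heE : ∀ j, e j ≤ E.card := fun j => Finset.card_le_card (Finset.filter_subset _ _)
  have hemono : ∀ j, j + 1 ∈ E → e j + 1 ≤ e (j + 1) := by
    intro j hj
    have hsub : insert (j + 1) (E.filter (fun i => i ≤ j)) ⊆ E.filter (fun i => i ≤ j + 1) := by
      intro i hi
      rw [Finset.mem_insert] at hi
      rcases hi with rfl | hi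
      · exact Finset.mem_filter.mpr ⟨hj, le_refl _⟩
      · obtain ⟨h1, h2⟩ := Finset.mem_filter.mp hi
        exact Finset.mem_filter.mpr ⟨h1, by omega⟩
    have hnm : j + 1 ∉ E.filter (fun i => i ≤ j) := by
      intro hc
      have := (Finset.mem_filter.mp hc).2
      omega
    calc e j + 1 = (insert (j + 1) (E.filter (fun i => i ≤ j))).card := by
          rw [Finset.card_insert_of_notMem hnm]
      _ ≤ e (j + 1) := Finset.card_le_card hsub
  -- 2^(e j) * B ≤ 1/8
  have hpowB : ∀ j, (2 : ℝ) ^ (e j) * B ≤ 1 / 8 := by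
    intro j
    have h1 : ((e j : ℝ)) ≤ δ * L := by
      calc ((e j : ℝ)) ≤ (E.card : ℝ) := by exact_mod_cast heE j
        _ ≤ δ * L := le_of_lt hEcard'
    have h2 : (2 : ℝ) ^ (e j) = (2 : ℝ) ^ ((e j : ℝ)) := (Real.rpow_natCast 2 (e j)).symm
    have h3 : (2 : ℝ) ^ ((e j : ℝ)) ≤ (2 : ℝ) ^ (δ * L) :=
      Real.rpow_le_rpow_left_iff (by norm_num) |>.mpr h1
    have h4 : (2 : ℝ) ^ (δ * L) * B = 1 / 8 := by
      rw [hB, ← mul_assoc, mul_comm ((2:ℝ) ^ (δ * L)) (1/8 : ℝ), mul_assoc,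
        ← Real.rpow_add (by norm_num)]
      norm_num
    calc (2 : ℝ) ^ (e j) * B ≤ (2 : ℝ) ^ (δ * L) * B := by
          rw [h2]; exact mul_le_mul_of_nonneg_right h3 (le_of_lt hBpos)
      _ = 1 / 8 := h4
  -- main induction
  have key : ∀ j, j0 ≤ j → j ≤ jL → v j = 2 ^ (j - j0) * v j0 ∧ v j ≤ 2 ^ (e j) * B := by
    intro j hj0j
    induction j, hj0j using Nat.le_induction with
    | base =>
      intro _
      constructor
      · simp
      · have h1 : v j0 < B := hSsmall j0 hj0S
        have h2 : (1 : ℝ) ≤ 2 ^ (e j0) := one_le_pow₀ (by norm_num : (1:ℝ) ≤ 2)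
        nlinarith
    | succ j hj ih =>
      intro hjle
      obtain ⟨heq, hle⟩ := ih (by omega)
      have hq4 : v j ≤ 1 / 4 := le_trans hle (le_trans (hpowB j) (by norm_num))
      have hstep : v (j + 1) = 2 * v j := hdbl j hq4
      have hpow : (2 : ℝ) ^ (j + 1 - j0) = 2 * 2 ^ (j - j0) := by
        have : j + 1 - j0 = (j - j0) + 1 := by omega
        rw [this, pow_succ]
        ring
      constructor
      · rw [hstep, heq, hpow]
        ring
      · by_cases hmem : (j + 1) ∈ E
        · have h1 := hemono j hmem
          calc v (j + 1) = 2 * v j := hstep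
            _ ≤ 2 * (2 ^ (e j) * B) := by nlinarith
            _ = 2 ^ (e j + 1) * B := by rw [pow_succ]; ring
            _ ≤ 2 ^ (e (j + 1)) * B := by
                apply mul_le_mul_of_nonneg_right _ (le_of_lt hBpos)
                exact pow_le_pow_right₀ (by norm_num) h1
        · have hjS : j + 1 ∈ S := (hmemS (j + 1)).mpr ⟨by omega, hmem⟩
          have h1 : v (j + 1) < B := hSsmall (j + 1) hjS
          have h2 : (1 : ℝ) ≤ 2 ^ (e (j + 1)) := one_le_pow₀ (by norm_num : (1:ℝ) ≤ 2)
          nlinarith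
  obtain ⟨heq, _⟩ := key jL hj0jL le_rfl
  -- count: j0 + (ℓ - 1 - jL) ≤ E.card
  have hcount : j0 + (ℓ - 1 - jL) ≤ E.card := by
    have hsub : Finset.range j0 ∪ Finset.Icc (jL + 1) (ℓ - 1) ⊆ E := by
      intro i hi
      rw [Finset.mem_union, Finset.mem_range, Finset.mem_Icc] at hi
      by_contra hiE
      rcases hi with h | h
      · have hiS : i ∈ S := (hmemS i).mpr ⟨by omega, hiE⟩
        have := S.min'_le i hiS
        omega
      · have hiS : i ∈ S := (hmemS i).mpr ⟨by omega, hiE⟩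
        have := S.le_max' i hiS
        omega
    have hdisj : Disjoint (Finset.range j0) (Finset.Icc (jL + 1) (ℓ - 1)) := by
      rw [Finset.disjoint_left]
      intro i hi1 hi2
      rw [Finset.mem_range] at hi1
      rw [Finset.mem_Icc] at hi2
      omega
    have := Finset.card_le_card hsub
    rw [Finset.card_union_of_disjoint hdisj, Finset.card_range, Nat.card_Icc] at this
    omega
  -- final contradiction
  have hgap : (L : ℝ) - 1 - δ * L < ((jL - j0 : ℕ) : ℝ) := by
    have hnat : jL - j0 + E.card + 1 ≥ ℓ := by omega
    have h2 : ((jL - j0 : ℕ) : ℝ) + (E.card : ℝ) + 1 ≥ (ℓ : ℝ) := by exact_mod_cast hnat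
    rw [hLℓ] at h2
    linarith
  have hqlt : (q : ℝ) < (2 : ℝ) ^ (L : ℝ) := by
    have h1 : q < 2 ^ ℓ := Nat.lt_pow_succ_log_self (by norm_num) q
    have h2 : ((2 : ℕ) ^ ℓ : ℝ) = (2 : ℝ) ^ (L : ℝ) := by
      rw [← hLℓ, Real.rpow_natCast]
      push_cast
      ring
    calc (q : ℝ) < ((2 : ℕ) ^ ℓ : ℝ) := by exact_mod_cast h1
      _ = (2 : ℝ) ^ (L : ℝ) := h2
  have hvj0 : (2 : ℝ) ^ (-(L : ℝ)) < v j0 := by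
    have h1 : (2 : ℝ) ^ (-(L : ℝ)) = 1 / (2 : ℝ) ^ (L : ℝ) := by
      rw [Real.rpow_neg (by norm_num), one_div]
    rw [h1]
    calc 1 / (2 : ℝ) ^ (L : ℝ) < 1 / (q : ℝ) := by
          apply one_div_lt_one_div_of_lt hqR hqlt
      _ ≤ v j0 := hvlb j0
  have hpowgap : (2 : ℝ) ^ (L - 1 - δ * L) < (2 : ℝ) ^ ((jL - j0 : ℕ) : ℝ) :=
    Real.rpow_lt_rpow_left_iff (by norm_num) |>.mpr hgap
  have hfinal : (2 : ℝ) ^ (L - 1 - δ * L) * (2 : ℝ) ^ (-(L : ℝ)) < v jL := by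
    have h1 : (2 : ℝ) ^ ((jL - j0 : ℕ) : ℝ) = (2 : ℝ) ^ (jL - j0) := Real.rpow_natCast 2 _
    rw [heq]
    have hp1 : (0 : ℝ) < (2 : ℝ) ^ (L - 1 - δ * L) := Real.rpow_pos_of_pos (by norm_num) _
    have hp2 : (0 : ℝ) < (2 : ℝ) ^ (-(L : ℝ)) := Real.rpow_pos_of_pos (by norm_num) _
    have hp3 : (0 : ℝ) < (2 : ℝ) ^ ((jL - j0 : ℕ) : ℝ) := Real.rpow_pos_of_pos (by norm_num) _
    calc (2 : ℝ) ^ (L - 1 - δ * L) * (2 : ℝ) ^ (-(L : ℝ))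
        < (2 : ℝ) ^ ((jL - j0 : ℕ) : ℝ) * v j0 := by
          apply mul_lt_mul' (le_of_lt hpowgap) hvj0 (le_of_lt hp2) hp3
      _ = 2 ^ (jL - j0) * v j0 := by rw [h1]
  have hcomb : (2 : ℝ) ^ (L - 1 - δ * L) * (2 : ℝ) ^ (-(L : ℝ)) = (1 / 2) * (2 : ℝ) ^ (-(δ * L)) := by
    rw [← Real.rpow_add (by norm_num)]
    rw [show L - 1 - δ * L + -L = -1 + -(δ * L) by ring, Real.rpow_add (by norm_num),
      Real.rpow_neg_one]
    ring
  have hvjLB : v jL < B := hSsmall jL hjLS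
  rw [hcomb] at hfinal
  have hpos : (0 : ℝ) < (2 : ℝ) ^ (-(δ * L)) := Real.rpow_pos_of_pos (by norm_num) _
  rw [hB] at hvjLB
  linarith
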